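/- Let N ≥ 1, let c ∈ (0,1) and t₁, …, t_N ∈ ℝ, and set S_i(x) = cx + t_i. Let p = (p₁, …, p_N) and q = (q₁, …, q_N) be probability vectors with each p_i, q_i ∈ (0,1), and let μ_p and μ_q be Borel probability measures on ℝ, supported in [0,1], satisfying μ_p = Σ_{i=1}^N p_i · μ_p ∘ S_i⁻¹ and μ_q = Σ_{i=1}^N q_i · μ_q ∘ S_i⁻¹. Then the first Wasserstein distance satisfies W₁(μ_p, μ_q) ≥ |Σ_{i=1}^N (p_i − q_i) t_i| / (1 − c). -/
import Mathlib


open MeasureTheory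

/-- The first Wasserstein distance: the infimum over couplings of μ and ν of the
first moment ∫ |x − y| dγ. -/
noncomputable def wasserstein1 (μ ν : Measure ℝ) : ℝ :=
  sInf { a : ℝ | ∃ γ : Measure (ℝ × ℝ), IsProbabilityMeasure γ ∧
    γ.map Prod.fst = μ ∧ γ.map Prod.snd = ν ∧ a = ∫ z : ℝ × ℝ, |z.1 - z.2| ∂γ }


lemma ae_mem_Icc_of_compl (μ : Measure ℝ) (hsupp : μ ((Set.Icc (0:ℝ) 1)ᶜ) = 0) :
    ∀ᵐ x ∂μ, x ∈ Set.Icc (0:ℝ) 1 := by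
  rw [MeasureTheory.ae_iff]
  exact hsupp

lemma integrable_id_of_supp (μ : Measure ℝ) [IsProbabilityMeasure μ]
    (hsupp : μ ((Set.Icc (0:ℝ) 1)ᶜ) = 0) : Integrable (fun x : ℝ => x) μ := by
  refine Integrable.mono' (integrable_const (1:ℝ)) measurable_id'.aestronglyMeasurable ?_
  filter_upwards [ae_mem_Icc_of_compl μ hsupp] with x hx
  rw [Real.norm_eq_abs, abs_le]
  exact ⟨by linarith [hx.1], hx.2⟩

lemma mean_selfsimilar (N : ℕ) (c : ℝ) (hc : c ∈ Set.Ioo (0:ℝ) 1) (t : Fin N → ℝ)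
    (p : Fin N → ℝ) (hp : ∀ i, p i ∈ Set.Ioo (0:ℝ) 1) (hpsum : ∑ i, p i = 1)
    (μ : Measure ℝ) [IsProbabilityMeasure μ]
    (hsupp : μ ((Set.Icc (0:ℝ) 1)ᶜ) = 0)
    (hss : μ = ∑ i, ENNReal.ofReal (p i) • μ.map (fun x : ℝ => c * x + t i)) :
    ∫ x, x ∂μ = (∑ i, p i * t i) / (1 - c) := by
  have hint : Integrable (fun x : ℝ => x) μ := integrable_id_of_supp μ hsupp
  have hmeas : ∀ i : Fin N, Measurable (fun x : ℝ => c * x + t i) := fun i =>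
    (measurable_id.const_mul c).add_const _
  have hmap : ∀ i : Fin N, ∫ x, x ∂(μ.map (fun x : ℝ => c * x + t i))
      = c * (∫ x, x ∂μ) + t i := by
    intro i
    rw [integral_map (hmeas i).aemeasurable measurable_id'.aestronglyMeasurable]
    rw [integral_add (hint.const_mul c) (integrable_const _)]
    rw [MeasureTheory.integral_const_mul]
    simp [measure_univ]
  have hint2 : ∀ i : Fin N,
      Integrable (fun x : ℝ => x) (ENNReal.ofReal (p i) • μ.map (fun x : ℝ => c * x + t i)) := by
    intro i
    refine Integrable.smul_measure ?_ ENNReal.ofReal_ne_top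
    rw [integrable_map_measure measurable_id'.aestronglyMeasurable (hmeas i).aemeasurable]
    exact (hint.const_mul c).add (integrable_const _)
  have key : ∫ x, x ∂μ = ∑ i, p i * (c * (∫ x, x ∂μ) + t i) := by
    conv_lhs => rw [hss]
    rw [integral_finset_sum_measure (fun i _ => hint2 i)]
    refine Finset.sum_congr rfl fun i _ => ?_
    rw [integral_smul_measure, hmap i, ENNReal.toReal_ofReal (le_of_lt (hp i).1)]
    rfl
  have h1c : (1 : ℝ) - c ≠ 0 := by have := hc.2; linarith
  have key2 : ∫ x, x ∂μ = c * (∫ x, x ∂μ) + ∑ i, p i * t i := by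
    conv_lhs => rw [key]
    have h : ∀ i ∈ Finset.univ, p i * (c * (∫ x, x ∂μ) + t i)
        = p i * (c * (∫ x, x ∂μ)) + p i * t i := fun i _ => mul_add _ _ _
    rw [Finset.sum_congr rfl h, Finset.sum_add_distrib, ← Finset.sum_mul, hpsum, one_mul]
  field_simp
  linarith [key2]


/-- A lower bound for the first Wasserstein distance between two self-similar
measures for an IFS of N similitudes on the line with common contraction ratio c. -/
theorem wasserstein1_equicontractive_lower_bound
    (N : ℕ) (hN : 1 ≤ N) (c : ℝ) (hc : c ∈ Set.Ioo (0:ℝ) 1) (t : Fin N → ℝ)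
    (p q : Fin N → ℝ)
    (hp : ∀ i, p i ∈ Set.Ioo (0:ℝ) 1) (hpsum : ∑ i, p i = 1)
    (hq : ∀ i, q i ∈ Set.Ioo (0:ℝ) 1) (hqsum : ∑ i, q i = 1)
    (μp : Measure ℝ) (hμp : IsProbabilityMeasure μp)
    (hsuppp : μp ((Set.Icc (0:ℝ) 1)ᶜ) = 0)
    (hssp : μp = ∑ i, ENNReal.ofReal (p i) • μp.map (fun x : ℝ => c * x + t i))
    (μq : Measure ℝ) (hμq : IsProbabilityMeasure μq)
    (hsuppq : μq ((Set.Icc (0:ℝ) 1)ᶜ) = 0)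
    (hssq : μq = ∑ i, ENNReal.ofReal (q i) • μq.map (fun x : ℝ => c * x + t i)) :
    wasserstein1 μp μq ≥ |∑ i, (p i - q i) * t i| / (1 - c) := by
  haveI := hμp; haveI := hμq
  have hmp := mean_selfsimilar N c hc t p hp hpsum μp hsuppp hssp
  have hmq := mean_selfsimilar N c hc t q hq hqsum μq hsuppq hssq
  have h1c : (0:ℝ) < 1 - c := by linarith [hc.2]
  have hbound : |∑ i, (p i - q i) * t i| / (1 - c)
      = |(∫ x, x ∂μp) - (∫ x, x ∂μq)| := by
    rw [hmp, hmq, div_sub_div_same, abs_div, abs_of_pos h1c]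
    congr 2
    rw [← Finset.sum_sub_distrib]
    exact Finset.sum_congr rfl fun i _ => by ring
  rw [ge_iff_le, hbound, wasserstein1]
  apply le_csInf
  · refine ⟨_, μp.prod μq, inferInstance, ?_, ?_, rfl⟩
    · simp [Measure.map_fst_prod, measure_univ]
    · simp [Measure.map_snd_prod, measure_univ]
  · rintro a ⟨γ, hγ, hfst, hsnd, rfl⟩
    haveI := hγ
    have hγ1 : γ ((fun z : ℝ × ℝ => z.1) ⁻¹' (Set.Icc (0:ℝ) 1)ᶜ) = 0 := by
      rw [← Measure.map_apply measurable_fst (measurableSet_Icc.compl), hfst]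
      exact hsuppp
    have hγ2 : γ ((fun z : ℝ × ℝ => z.2) ⁻¹' (Set.Icc (0:ℝ) 1)ᶜ) = 0 := by
      rw [← Measure.map_apply measurable_snd (measurableSet_Icc.compl), hsnd]
      exact hsuppq
    have hae1 : ∀ᵐ z : ℝ × ℝ ∂γ, z.1 ∈ Set.Icc (0:ℝ) 1 := by
      rw [MeasureTheory.ae_iff]; exact hγ1
    have hae2 : ∀ᵐ z : ℝ × ℝ ∂γ, z.2 ∈ Set.Icc (0:ℝ) 1 := by
      rw [MeasureTheory.ae_iff]; exact hγ2
    have hint1 : Integrable (fun z : ℝ × ℝ => z.1) γ := by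
      refine Integrable.mono' (integrable_const (1:ℝ))
        measurable_fst.aestronglyMeasurable ?_
      filter_upwards [hae1] with z hz
      rw [Real.norm_eq_abs, abs_le]; exact ⟨by linarith [hz.1], hz.2⟩
    have hint2 : Integrable (fun z : ℝ × ℝ => z.2) γ := by
      refine Integrable.mono' (integrable_const (1:ℝ))
        measurable_snd.aestronglyMeasurable ?_
      filter_upwards [hae2] with z hz
      rw [Real.norm_eq_abs, abs_le]; exact ⟨by linarith [hz.1], hz.2⟩
    have e1 : ∫ x, x ∂μp = ∫ z : ℝ × ℝ, z.1 ∂γ := by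
      rw [← hfst, integral_map measurable_fst.aemeasurable
        measurable_id'.aestronglyMeasurable]
    have e2 : ∫ x, x ∂μq = ∫ z : ℝ × ℝ, z.2 ∂γ := by
      rw [← hsnd, integral_map measurable_snd.aemeasurable
        measurable_id'.aestronglyMeasurable]
    calc |(∫ x, x ∂μp) - (∫ x, x ∂μq)| = |∫ z : ℝ × ℝ, (z.1 - z.2) ∂γ| := by
          rw [e1, e2, integral_sub hint1 hint2]
      _ ≤ ∫ z : ℝ × ℝ, |z.1 - z.2| ∂γ := by
          simpa [Real.norm_eq_abs] using
            norm_integral_le_integral_norm (μ := γ) (fun z : ℝ × ℝ => z.1 - z.2)
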